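/- Let Q_ε be symmetric positive definite, p ∈ ℝ^N, and let Ω̂ = {v ≥ 0 : v_j = 0 for all j ∉ J} for a fixed index set J ⊆ {1,…,N}. Suppose there exists w̃ ∈ Ω̂ with pᵀw̃ > 0, and let v* be the (unique, by strict convexity) global minimizer of f(v) = ½ vᵀQ_ε v − pᵀv over the closed convex set Ω̂. Then v* ≠ 0, pᵀv* = (v*)ᵀQ_ε v* > 0, and w* := v*/(v*ᵀ1) maximizes S(w) = pᵀw / √(wᵀQ_ε w) over Ω̂₁ := {w ∈ Ω̂ : wᵀ1 = 1}. -/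

import Mathlib

open Matrix Finset

theorem stmt_17 (N : ℕ) (Q : Matrix (Fin N) (Fin N) ℝ) (hQ : Q.PosDef)
    (p : Fin N → ℝ) (J : Finset (Fin N))
    (Ωhat Ωhat₁ : Set (Fin N → ℝ))
    (hΩhat : Ωhat = {v | (∀ i, 0 ≤ v i) ∧ ∀ j ∉ J, v j = 0})
    (hΩhat₁ : Ωhat₁ = {w ∈ Ωhat | (∑ i, w i) = 1})
    (hexist : ∃ w ∈ Ωhat, 0 < p ⬝ᵥ w)
    (vs : Fin N → ℝ) (hvs : vs ∈ Ωhat)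
    (hmin : ∀ v ∈ Ωhat,
      (1/2) * (vs ⬝ᵥ Q.mulVec vs) - p ⬝ᵥ vs ≤ (1/2) * (v ⬝ᵥ Q.mulVec v) - p ⬝ᵥ v) :
    vs ≠ 0 ∧ p ⬝ᵥ vs = vs ⬝ᵥ Q.mulVec vs ∧ 0 < p ⬝ᵥ vs ∧
    (∑ i, vs i)⁻¹ • vs ∈ Ωhat₁ ∧
    ∀ w ∈ Ωhat₁,
      p ⬝ᵥ w / Real.sqrt (w ⬝ᵥ Q.mulVec w) ≤
        p ⬝ᵥ ((∑ i, vs i)⁻¹ • vs) /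
          Real.sqrt (((∑ i, vs i)⁻¹ • vs) ⬝ᵥ Q.mulVec ((∑ i, vs i)⁻¹ • vs)) := by
  have hpos : ∀ x : Fin N → ℝ, x ≠ 0 → 0 < x ⬝ᵥ Q.mulVec x := by
    intro x hx; simpa using hQ.dotProduct_mulVec_pos hx
  have hscale : ∀ (t : ℝ), 0 ≤ t → ∀ v ∈ Ωhat, t • v ∈ Ωhat := by
    intro t ht v hv
    rw [hΩhat] at hv ⊢
    exact ⟨fun i => mul_nonneg ht (hv.1 i), fun j hj => by simp [hv.2 j hj]⟩
  have hq : ∀ (t : ℝ) (v : Fin N → ℝ), (t • v) ⬝ᵥ Q.mulVec (t • v) = t^2 * (v ⬝ᵥ Q.mulVec v) := by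
    intro t v
    rw [Matrix.mulVec_smul, smul_dotProduct, dotProduct_smul]; simp [smul_eq_mul]; ring
  have hl : ∀ (t : ℝ) (v : Fin N → ℝ), p ⬝ᵥ (t • v) = t * (p ⬝ᵥ v) := by
    intro t v; rw [dotProduct_smul]; simp [smul_eq_mul]
  obtain ⟨w₀, hw₀, hpw₀⟩ := hexist
  have hw₀ne : w₀ ≠ 0 := by rintro rfl; simp at hpw₀
  set c := w₀ ⬝ᵥ Q.mulVec w₀ with hc
  have hcpos : 0 < c := hpos w₀ hw₀ne
  set d := p ⬝ᵥ w₀ with hd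
  set a := vs ⬝ᵥ Q.mulVec vs with ha
  set b := p ⬝ᵥ vs with hb
  -- f(vs) ≤ f((d/c) • w₀) = -d²/(2c) < 0
  have hfvs : (1/2) * a - b < 0 := by
    have hmem := hscale (d/c) (by positivity) w₀ hw₀
    have h0 := hmin _ hmem
    rw [hq, hl] at h0
    have h1 : (1/2) * ((d/c)^2 * c) - d/c * d = -(d^2/(2*c)) := by field_simp; ring
    have h2 : 0 < d^2/(2*c) := by positivity
    linarith [h1 ▸ h0]
  have hvsne : vs ≠ 0 := by
    rintro rfl
    simp [ha, hb] at hfvs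
  have hapos : 0 < a := hpos vs hvsne
  have hbpos : 0 < b := by linarith
  -- b = a via scaling t = b/a
  have hab : b = a := by
    have hmem := hscale (b/a) (by positivity) vs hvs
    have h0 := hmin _ hmem
    rw [hq, hl] at h0
    have h1 : (1/2) * ((b/a)^2 * a) - b/a * b = -(b^2/(2*a)) := by field_simp; ring
    rw [h1] at h0
    have h2 : ((1/2) * a - b) * (2*a) ≤ -(b^2/(2*a)) * (2*a) :=
      mul_le_mul_of_nonneg_right h0 (by positivity)
    have h3 : -(b^2/(2*a)) * (2*a) = -b^2 := by field_simp
    nlinarith [sq_nonneg (a - b)]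
  have hvs' := hΩhat ▸ hvs
  have hsnn : ∀ i, 0 ≤ vs i := hvs'.1
  set s := ∑ i, vs i with hs
  have hspos : 0 < s := by
    rcases lt_or_eq_of_le (Finset.sum_nonneg fun i _ => hsnn i) with h | h
    · exact h
    · exfalso; apply hvsne; funext i
      have h0 := (Finset.sum_eq_zero_iff_of_nonneg (fun i _ => hsnn i)).1 h.symm i (mem_univ i)
      simpa using h0
  have hmem₁ : s⁻¹ • vs ∈ Ωhat₁ := by
    rw [hΩhat₁]
    refine ⟨hscale s⁻¹ (by positivity) vs hvs, ?_⟩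
    simp only [Pi.smul_apply, smul_eq_mul]
    rw [← Finset.mul_sum, ← hs, inv_mul_cancel₀ (ne_of_gt hspos)]
  -- value at the normalized vector
  have hval : p ⬝ᵥ (s⁻¹ • vs) / Real.sqrt ((s⁻¹ • vs) ⬝ᵥ Q.mulVec (s⁻¹ • vs)) = Real.sqrt a := by
    rw [hq, hl, ← hb, ← ha, hab]
    rw [Real.sqrt_mul (by positivity) a, Real.sqrt_sq (by positivity)]
    rw [mul_div_mul_left _ _ (by positivity : (s:ℝ)⁻¹ ≠ 0)]
    exact Real.div_sqrt
  refine ⟨hvsne, hab, hbpos, hmem₁, ?_⟩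
  intro w hw
  rw [hval]
  rw [hΩhat₁] at hw
  obtain ⟨hwΩ, hwsum⟩ := hw
  have hwne : w ≠ 0 := by rintro rfl; simp at hwsum
  have hepos : 0 < w ⬝ᵥ Q.mulVec w := hpos w hwne
  set e := w ⬝ᵥ Q.mulVec w with he
  set q := p ⬝ᵥ w with hqdef
  rcases le_or_gt q 0 with hq0 | hq0
  · calc q / Real.sqrt e ≤ 0 := div_nonpos_of_nonpos_of_nonneg hq0 (Real.sqrt_nonneg e)
      _ ≤ Real.sqrt a := Real.sqrt_nonneg a
  · -- key inequality q² ≤ a * e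
    have hmem := hscale (q/e) (by positivity) w hwΩ
    have h0 := hmin _ hmem
    rw [hq, hl, hab] at h0
    have h1 : (1/2) * ((q/e)^2 * e) - q/e * q = -(q^2/(2*e)) := by field_simp; ring
    rw [h1] at h0
    have h2 : q^2 ≤ a * e := by
      have h3 : ((1/2) * a - a) * (2*e) ≤ -(q^2/(2*e)) * (2*e) :=
        mul_le_mul_of_nonneg_right h0 (by positivity)
      have h4 : -(q^2/(2*e)) * (2*e) = -q^2 := by field_simp
      nlinarith
    have h5 : q ≤ Real.sqrt a * Real.sqrt e := by
      rw [← Real.sqrt_mul hapos.le]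
      exact Real.le_sqrt' hq0 |>.2 h2
    rw [div_le_iff₀ (Real.sqrt_pos.2 hepos)]
    linarith
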